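/- No-cloning theorem: there is no linear operator C on H ⊗ H (H a complex Hilbert space of dimension at least 2) such that C(ψ ⊗ e) = ψ ⊗ ψ for all unit vectors ψ, where e is a fixed state. Equivalently, if a linear map satisfies C(ψ ⊗ e) = ψ ⊗ ψ for two linearly independent unit vectors ψ, σ, then it fails for their normalized sum. -/
import Mathlib


open TensorProduct
open scoped ComplexInnerProductSpace

theorem no_cloning {H : Type*} [NormedAddCommGroup H] [InnerProductSpace ℂ H]
    [FiniteDimensional ℂ H] (hdim : 2 ≤ Module.finrank ℂ H) (e : H) :
    ¬ ∃ C : H ⊗[ℂ] H →ₗ[ℂ] H ⊗[ℂ] H,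
      ∀ ψ : H, ‖ψ‖ = 1 → C (ψ ⊗ₜ[ℂ] e) = ψ ⊗ₜ[ℂ] ψ := by
  rintro ⟨C, hC⟩
  -- pick two orthonormal vectors
  set b := stdOrthonormalBasis ℂ H
  have h0 : (0 : ℕ) < Module.finrank ℂ H := by omega
  have h1 : (1 : ℕ) < Module.finrank ℂ H := by omega
  set ψ := b ⟨0, h0⟩ with hψdef
  set σ := b ⟨1, h1⟩ with hσdef
  have hψ : ‖ψ‖ = 1 := b.orthonormal.1 _
  have hσ : ‖σ‖ = 1 := b.orthonormal.1 _
  have hon : ⟪ψ, σ⟫ = 0 := by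
    apply b.orthonormal.2
    simp
  have hon' : ⟪σ, ψ⟫ = 0 := by
    rw [← inner_conj_symm, hon, map_zero]
  have hψψ : ⟪ψ, ψ⟫ = 1 := by
    rw [inner_self_eq_norm_sq_to_K, hψ]; norm_num
  have hσσ : ⟪σ, σ⟫ = 1 := by
    rw [inner_self_eq_norm_sq_to_K, hσ]; norm_num
  -- the normalized sum
  have hsum_sq : ‖ψ + σ‖ ^ 2 = 2 := by
    rw [← @inner_self_eq_norm_sq ℂ]
    rw [inner_add_add_self, hon, hon', hψψ, hσσ]
    norm_num
  have hsum : ‖ψ + σ‖ = Real.sqrt 2 := by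
    rw [← Real.sqrt_sq (norm_nonneg (ψ + σ)), hsum_sq]
  set c : ℂ := ((Real.sqrt 2 : ℝ)⁻¹ : ℂ) with hc
  have hsqrt2_pos : (0:ℝ) < Real.sqrt 2 := Real.sqrt_pos.2 (by norm_num)
  have hφnorm : ‖c • (ψ + σ)‖ = 1 := by
    rw [norm_smul, hsum, hc]
    simp only [norm_inv, Complex.norm_real, Real.norm_eq_abs,
      abs_of_pos hsqrt2_pos]
    field_simp
  -- key equation
  have key : C ((c • (ψ + σ)) ⊗ₜ[ℂ] e) = (c • (ψ + σ)) ⊗ₜ[ℂ] (c • (ψ + σ)) :=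
    hC _ hφnorm
  have expand : C ((c • (ψ + σ)) ⊗ₜ[ℂ] e)
      = c • (ψ ⊗ₜ[ℂ] ψ) + c • (σ ⊗ₜ[ℂ] σ) := by
    rw [← TensorProduct.smul_tmul', map_smul, TensorProduct.add_tmul, map_add,
      hC ψ hψ, hC σ hσ, smul_add]
  -- functional picking out the ψ ⊗ σ coefficient
  let F : H ⊗[ℂ] H →ₗ[ℂ] ℂ := TensorProduct.lift (LinearMap.mk₂ ℂ
    (fun x y => ⟪ψ, x⟫ * ⟪σ, y⟫)
    (fun x x' y => by simp only [inner_add_right]; ring)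
    (fun a x y => by simp only [inner_smul_right, smul_eq_mul]; ring)
    (fun x y y' => by simp only [inner_add_right]; ring)
    (fun a x y => by simp only [inner_smul_right, smul_eq_mul]; ring))
  have hF : ∀ x y : H, F (x ⊗ₜ[ℂ] y) = ⟪ψ, x⟫ * ⟪σ, y⟫ := fun x y => rfl
  have heq := congrArg F (expand.symm.trans key)
  rw [map_add, map_smul, map_smul, hF, hF, hψψ, hσσ, hon, hon', hF] at heq
  simp only [inner_smul_right, inner_add_right, hψψ, hσσ, hon, hon',
    smul_eq_mul, mul_zero, zero_mul, mul_one, add_zero, zero_add] at heq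
  have hc0 : c ≠ 0 := by
    rw [hc]
    simp only [ne_eq, inv_eq_zero, Complex.ofReal_eq_zero]
    positivity
  exact hc0 (mul_self_eq_zero.mp heq.symm)
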